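/- For all real x ∈ (0.5, 1.5), x·log(x) ≥ (x − 1) + (1/3)(x − 1)². -/

import Mathlib

open Real Set

private lemma hd1 (y : ℝ) (hy : 0 < y) :
    HasDerivAt (fun t : ℝ => Real.log t - 2*(t-1)/(t+1))
      (1/y - 4/(y+1)^2) y := by
  have h1 : HasDerivAt Real.log (1/y) y := by
    simpa [one_div] using Real.hasDerivAt_log hy.ne'
  have hne : y + 1 ≠ 0 := by linarith
  have hnum : HasDerivAt (fun t : ℝ => 2*(t-1)) 2 y := by
    simpa using ((hasDerivAt_id y).sub_const 1).const_mul 2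
  have hden : HasDerivAt (fun t : ℝ => t+1) 1 y := (hasDerivAt_id y).add_const 1
  have h2 : HasDerivAt (fun t : ℝ => 2*(t-1)/(t+1)) _ y := hnum.div hden hne
  have h2' : HasDerivAt (fun t : ℝ => 2*(t-1)/(t+1)) (4/(y+1)^2) y := by
    convert h2 using 1
    ring
  exact h1.sub h2'

private lemma log_ge_pade1 (x : ℝ) (hx : 1 ≤ x) :
    2*(x-1)/(x+1) ≤ Real.log x := by
  set f : ℝ → ℝ := fun t => Real.log t - 2*(t-1)/(t+1) with hf
  have hmono : MonotoneOn f (Ici 1) := by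
    apply monotoneOn_of_deriv_nonneg (convex_Ici 1)
    · intro y hy
      have hy0 : (0:ℝ) < y := lt_of_lt_of_le one_pos hy
      exact (hd1 y hy0).continuousAt.continuousWithinAt
    · intro y hy
      rw [interior_Ici] at hy
      have hy0 : (0:ℝ) < y := lt_trans one_pos hy
      exact (hd1 y hy0).differentiableAt.differentiableWithinAt
    · intro y hy
      rw [interior_Ici] at hy
      have hy0 : (0:ℝ) < y := lt_trans one_pos hy
      rw [(hd1 y hy0).deriv]
      have h1 : (0:ℝ) < (y+1)^2 := by positivity
      rw [sub_nonneg, div_le_div_iff₀ h1 hy0]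
      nlinarith [sq_nonneg (y-1)]
  have h := hmono (by simp : (1:ℝ) ∈ Ici (1:ℝ)) hx hx
  have hf1 : f 1 = 0 := by simp [hf]
  rw [hf1] at h
  simpa [hf, sub_nonneg] using h

private lemma hd2 (y : ℝ) (hy : 0 < y) :
    HasDerivAt (fun t : ℝ => Real.log t - (t^2-1)/(2*t))
      (1/y - (y^2+1)/(2*y^2)) y := by
  have h1 : HasDerivAt Real.log (1/y) y := by
    simpa [one_div] using Real.hasDerivAt_log hy.ne'
  have hne : 2*y ≠ 0 := by positivity
  have hnum : HasDerivAt (fun t : ℝ => t^2-1) (2*y) y := by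
    simpa using ((hasDerivAt_pow 2 y).sub_const 1)
  have hden : HasDerivAt (fun t : ℝ => 2*t) 2 y := by
    simpa using (hasDerivAt_id y).const_mul 2
  have h2 : HasDerivAt (fun t : ℝ => (t^2-1)/(2*t)) _ y := hnum.div hden hne
  have h2' : HasDerivAt (fun t : ℝ => (t^2-1)/(2*t)) ((y^2+1)/(2*y^2)) y := by
    convert h2 using 1
    ring
  exact h1.sub h2'

private lemma log_ge_pade2 (x : ℝ) (hx0 : 0 < x) (hx : x ≤ 1) :
    (x^2-1)/(2*x) ≤ Real.log x := by
  set g : ℝ → ℝ := fun t => Real.log t - (t^2-1)/(2*t) with hg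
  have hanti : AntitoneOn g (Ioc 0 1) := by
    apply antitoneOn_of_deriv_nonpos (convex_Ioc 0 1)
    · intro y hy
      exact (hd2 y hy.1).continuousAt.continuousWithinAt
    · intro y hy
      rw [interior_Ioc] at hy
      exact (hd2 y hy.1).differentiableAt.differentiableWithinAt
    · intro y hy
      rw [interior_Ioc] at hy
      have hy0 : (0:ℝ) < y := hy.1
      rw [(hd2 y hy0).deriv]
      have h1 : (0:ℝ) < 2*y^2 := by positivity
      rw [sub_nonpos, div_le_div_iff₀ hy0 h1]
      nlinarith [sq_nonneg (y-1)]
  have h := hanti (⟨hx0, hx⟩ : x ∈ Ioc (0:ℝ) 1) (by simp : (1:ℝ) ∈ Ioc (0:ℝ) 1) hx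
  have hg1 : g 1 = 0 := by norm_num [hg]
  rw [hg1] at h
  simpa [hg, sub_nonneg] using h

/-- For all real `x ∈ (0.5, 1.5)`, `x log x ≥ (x-1) + (1/3)(x-1)²`. -/
theorem xlogx_ge (x : ℝ) (hx : x ∈ Set.Ioo (0.5 : ℝ) 1.5) :
    x * Real.log x ≥ (x - 1) + (1/3) * (x - 1)^2 := by
  obtain ⟨h05, h15⟩ := hx
  have hx0 : (0:ℝ) < x := by norm_num at h05 ⊢; linarith
  rcases le_total x 1 with h1 | h1
  · have h := log_ge_pade2 x hx0 h1
    have h2 : x * ((x^2-1)/(2*x)) ≤ x * Real.log x :=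
      mul_le_mul_of_nonneg_left h hx0.le
    have h3 : x * ((x^2-1)/(2*x)) = (x^2-1)/2 := by
      field_simp
    rw [h3] at h2
    nlinarith [sq_nonneg (x-1)]
  · have h := log_ge_pade1 x h1
    have h2 : x * (2*(x-1)/(x+1)) ≤ x * Real.log x :=
      mul_le_mul_of_nonneg_left h hx0.le
    have hx1 : (0:ℝ) < x + 1 := by linarith
    have h3 : (x - 1) + (1/3) * (x - 1)^2 ≤ x * (2*(x-1)/(x+1)) := by
      rw [mul_div_assoc', le_div_iff₀ hx1]
      have h15' : x ≤ 2 := by norm_num at h15; linarith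
      nlinarith [mul_nonneg (mul_nonneg (sq_nonneg (x-1)) (sub_nonneg.mpr h15')) (le_of_lt hx0)]
    linarith
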